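/- Let u : ℤ × ℤ → K be never-zero and define w(n,m) = u(n,m)^((-1)^(n+m)). Then u satisfies q²(uũ - 1)(ûũû - 1) = p²(uû - 1)(ũũû - 1) for all n, m if and only if w satisfies Q1(0) with parameters p², q²: p²(w - ŵ)(w̃ - w̃̂) = q²(w - w̃)(ŵ - w̃̂), for all n, m. -/

import Mathlib

/-- The point transformation w = u^((-1)^(n+m)) maps the equation
q²(uũ − 1)(û ũ̂ − 1) = p²(uû − 1)(ũ ũ̂ − 1) to Q1(0) with parameters p², q². -/
theorem stmt_19 {K : Type*} [Field K] (p q : K) (hp : p ≠ 0) (hq : q ≠ 0)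
    (u : ℤ → ℤ → K) (hu : ∀ n m : ℤ, u n m ≠ 0) :
    let w : ℤ → ℤ → K := fun n m => if Even (n + m) then u n m else (u n m)⁻¹
    (∀ n m : ℤ,
      q ^ 2 * (u n m * u (n + 1) m - 1) * (u n (m + 1) * u (n + 1) (m + 1) - 1) =
        p ^ 2 * (u n m * u n (m + 1) - 1) * (u (n + 1) m * u (n + 1) (m + 1) - 1))
    ↔
    (∀ n m : ℤ,
      p ^ 2 * (w n m - w n (m + 1)) * (w (n + 1) m - w (n + 1) (m + 1)) =
        q ^ 2 * (w n m - w (n + 1) m) * (w n (m + 1) - w (n + 1) (m + 1))) := by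
  intro w
  have key : ∀ n m : ℤ,
      (q ^ 2 * (u n m * u (n + 1) m - 1) * (u n (m + 1) * u (n + 1) (m + 1) - 1) =
        p ^ 2 * (u n m * u n (m + 1) - 1) * (u (n + 1) m * u (n + 1) (m + 1) - 1))
      ↔
      (p ^ 2 * (w n m - w n (m + 1)) * (w (n + 1) m - w (n + 1) (m + 1)) =
        q ^ 2 * (w n m - w (n + 1) m) * (w n (m + 1) - w (n + 1) (m + 1))) := by
    intro n m
    have ha := hu n m
    have hb := hu (n + 1) m
    have hc := hu n (m + 1)
    have hd := hu (n + 1) (m + 1)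
    by_cases hpar : Even (n + m)
    · have h1 : ¬ Even (n + 1 + m) := by
        rw [Int.even_iff] at hpar ⊢; omega
      have h2 : ¬ Even (n + (m + 1)) := by
        rw [Int.even_iff] at hpar ⊢; omega
      have h3 : Even (n + 1 + (m + 1)) := by
        rw [Int.even_iff] at hpar ⊢; omega
      have wa : w n m = u n m := if_pos hpar
      have wb : w (n + 1) m = (u (n + 1) m)⁻¹ := if_neg h1
      have wc : w n (m + 1) = (u n (m + 1))⁻¹ := if_neg h2
      have wd : w (n + 1) (m + 1) = u (n + 1) (m + 1) := if_pos h3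
      rw [wa, wb, wc, wd]
      constructor
      · intro h
        field_simp
        linear_combination h
      · intro h
        field_simp at h
        refine mul_left_cancel₀ (mul_ne_zero hb hc) ?_
        linear_combination (u (n + 1) m * u n (m + 1)) * h
    · have h1 : Even (n + 1 + m) := by
        rw [Int.even_iff] at hpar ⊢; omega
      have h2 : Even (n + (m + 1)) := by
        rw [Int.even_iff] at hpar ⊢; omega
      have h3 : ¬ Even (n + 1 + (m + 1)) := by
        rw [Int.even_iff] at hpar ⊢; omega
      have wa : w n m = (u n m)⁻¹ := if_neg hpar
      have wb : w (n + 1) m = u (n + 1) m := if_pos h1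
      have wc : w n (m + 1) = u n (m + 1) := if_pos h2
      have wd : w (n + 1) (m + 1) = (u (n + 1) (m + 1))⁻¹ := if_neg h3
      rw [wa, wb, wc, wd]
      constructor
      · intro h
        field_simp
        linear_combination h
      · intro h
        field_simp at h
        linear_combination h
  constructor
  · intro h n m; exact (key n m).mp (h n m)
  · intro h n m; exact (key n m).mpr (h n m)
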